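/- arXiv:1804.08127 — 3 statements merged into one kernel-verified Lean document; each statement's English description precedes it below -/
import Mathlib

section
/- For every α ∈ (0,1) and every real x > 0, x^α = C · ∫₀^∞ x/(t^{1/α} + x) dt, where C = sin(απ)/(απ). -/
open Real MeasureTheory


-- Step 1: real beta integral over Ioo 0 1
lemma beta_Ioo (α : ℝ) (hα0 : 0 < α) (hα1 : α < 1) :
    ∫ y in Set.Ioo (0:ℝ) 1, y ^ (α - 1) * (1 - y) ^ (-α) = π / Real.sin (π * α) := by
  have hB : Complex.betaIntegral α (1 - α) = ((π / Real.sin (π * α) : ℝ) : ℂ) := by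
    have h1 : Complex.Gamma α * Complex.Gamma (1 - α)
        = Complex.Gamma (α + (1 - α)) * Complex.betaIntegral α (1 - α) := by
      have := Complex.Gamma_mul_Gamma_eq_betaIntegral
        (s := (α : ℂ)) (t := ((1 - α : ℝ) : ℂ)) (by simpa using hα0)
        (by simp [Complex.ofReal_re]; linarith)
      simpa using this
    have h2 : (α : ℂ) + (1 - α) = 1 := by ring
    rw [h2, Complex.Gamma_one, one_mul] at h1
    rw [← h1]
    have h3 : ((1 : ℂ) - α) = ((1 - α : ℝ) : ℂ) := by push_cast; ring
    rw [h3, Complex.Gamma_ofReal, Complex.Gamma_ofReal, ← Complex.ofReal_mul,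
      Real.Gamma_mul_Gamma_one_sub]
  have key : Complex.betaIntegral α (1 - α)
      = ((∫ y in (0:ℝ)..1, y ^ (α - 1) * (1 - y) ^ (-α) : ℝ) : ℂ) := by
    rw [Complex.betaIntegral, ← intervalIntegral.integral_ofReal]
    apply intervalIntegral.integral_congr
    intro y hy
    rw [Set.uIcc_of_le (by norm_num : (0:ℝ) ≤ 1)] at hy
    obtain ⟨hy0, hy1⟩ := hy
    have h1 : ((y:ℝ) ^ (α - 1) : ℝ) = (y:ℂ) ^ ((α:ℂ) - 1) := by
      rw [Complex.ofReal_cpow hy0]; push_cast; ring_nf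
    have h2 : ((1 - y:ℝ) ^ (-α) : ℝ) = ((1:ℂ) - y) ^ ((1:ℂ) - α - 1) := by
      rw [Complex.ofReal_cpow (by linarith)]; push_cast; ring_nf
    push_cast
    rw [← h1, ← h2]
  rw [key] at hB
  have := Complex.ofReal_injective hB
  rw [← this, intervalIntegral.integral_of_le (by norm_num : (0:ℝ) ≤ 1),
    integral_Ioc_eq_integral_Ioo]

lemma J_int (α : ℝ) (hα0 : 0 < α) (hα1 : α < 1) :
    ∫ t in Set.Ioi (0:ℝ), t ^ (α - 1) / (1 + t) = π / Real.sin (π * α) := by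
  have hbeta := beta_Ioo α hα0 hα1
  set g : ℝ → ℝ := fun y => y ^ (α - 1) * (1 - y) ^ (-α) with hg
  have himg : (fun t => t / (1 + t)) '' Set.Ioi (0:ℝ) = Set.Ioo 0 1 := by
    ext y
    constructor
    · rintro ⟨t, ht, rfl⟩
      rw [Set.mem_Ioi] at ht
      have h1t : (0:ℝ) < 1 + t := by linarith
      constructor
      · positivity
      · rw [div_lt_one h1t]; linarith
    · rintro ⟨hy0, hy1⟩
      refine ⟨y / (1 - y), ?_, ?_⟩
      · have : (0:ℝ) < 1 - y := by linarith
        exact div_pos hy0 this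
      · have h1y : (1:ℝ) - y ≠ 0 := by intro h; nlinarith [h]
        field_simp
        ring
  have hderiv : ∀ t ∈ Set.Ioi (0:ℝ),
      HasDerivWithinAt (fun t => t / (1 + t)) ((1 + t) ^ 2)⁻¹ (Set.Ioi 0) t := by
    intro t ht
    rw [Set.mem_Ioi] at ht
    have h1t : (1:ℝ) + t ≠ 0 := by positivity
    have h0 : HasDerivAt (fun t : ℝ => 1 + t) 1 t := by
      simpa using (hasDerivAt_id t).const_add 1
    have h3 : HasDerivAt (fun t : ℝ => t / (1 + t))
        ((1 * (1 + t) - t * 1) / (1 + t) ^ 2) t := (hasDerivAt_id t).div h0 h1t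
    have h2 : (1 * (1 + t) - t * 1) / (1 + t) ^ 2 = ((1 + t) ^ 2)⁻¹ := by
      field_simp
      ring
    rw [h2] at h3
    exact h3.hasDerivWithinAt
  have hinj : Set.InjOn (fun t => t / (1 + t)) (Set.Ioi (0:ℝ)) := by
    intro a ha b hb hab
    rw [Set.mem_Ioi] at ha hb
    have h1 : (1:ℝ) + a ≠ 0 := by positivity
    have h2 : (1:ℝ) + b ≠ 0 := by positivity
    field_simp at hab
    linarith
  have := MeasureTheory.integral_image_eq_integral_abs_deriv_smul measurableSet_Ioi
    hderiv hinj g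
  rw [himg] at this
  rw [hbeta] at this
  rw [this]
  apply setIntegral_congr_fun measurableSet_Ioi
  intro t ht
  rw [Set.mem_Ioi] at ht
  have h1t : (0:ℝ) < 1 + t := by linarith
  have h1t' : (1:ℝ) + t ≠ 0 := ne_of_gt h1t
  have hd : 1 - t / (1 + t) = (1 + t)⁻¹ := by field_simp; ring
  simp only [hg, smul_eq_mul]
  rw [hd, Real.div_rpow (le_of_lt ht) (le_of_lt h1t),
    Real.inv_rpow (le_of_lt h1t), Real.rpow_neg (le_of_lt h1t), inv_inv]
  rw [abs_of_pos (by positivity)]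
  have e2 : t ^ (α - 1) / (1 + t) ^ (α - 1) * (1 + t) ^ α = t ^ (α - 1) * (1 + t) := by
    rw [div_mul_eq_mul_div, mul_div_assoc, ← Real.rpow_sub h1t]
    norm_num
  rw [e2]
  field_simp

/-- For `α ∈ (0,1)` and real `x > 0`,
`x^α = (sin(απ)/(απ)) · ∫₀^∞ x/(t^{1/α} + x) dt`. -/
theorem rpow_eq_integral (α x : ℝ) (hα0 : 0 < α) (hα1 : α < 1) (hx : 0 < x) :
    x ^ α = (Real.sin (α * π) / (α * π)) *
      ∫ t in Set.Ioi (0 : ℝ), x / (t ^ (1 / α) + x) := by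
  have hJ := J_int α hα0 hα1
  have hxα : (0:ℝ) < x ^ α := Real.rpow_pos_of_pos hx α
  set f : ℝ → ℝ := fun s => x ^ α * s ^ α with hf
  have himg : f '' Set.Ioi (0:ℝ) = Set.Ioi 0 := by
    ext t
    simp only [hf, Set.mem_image, Set.mem_Ioi]
    constructor
    · rintro ⟨s, hs, rfl⟩
      exact mul_pos hxα (Real.rpow_pos_of_pos hs α)
    · intro ht
      refine ⟨(t / x ^ α) ^ (1/α), Real.rpow_pos_of_pos (div_pos ht hxα) _, ?_⟩
      rw [← Real.rpow_mul (le_of_lt (div_pos ht hxα))]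
      rw [one_div_mul_cancel (ne_of_gt hα0), Real.rpow_one]
      field_simp
  have hderiv : ∀ s ∈ Set.Ioi (0:ℝ),
      HasDerivWithinAt f (x ^ α * (α * s ^ (α - 1))) (Set.Ioi 0) s := by
    intro s hs
    rw [Set.mem_Ioi] at hs
    exact ((Real.hasDerivAt_rpow_const (Or.inl (ne_of_gt hs))).const_mul
      (x ^ α)).hasDerivWithinAt
  have hinj : Set.InjOn f (Set.Ioi (0:ℝ)) := by
    intro a ha b hb hab
    rw [Set.mem_Ioi] at ha hb
    simp only [hf] at hab
    have h2 := mul_left_cancel₀ (ne_of_gt hxα) hab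
    have := Real.rpow_natCast -- dummy
    exact Real.rpow_left_injOn (ne_of_gt hα0) (le_of_lt ha) (le_of_lt hb) h2
  have key := MeasureTheory.integral_image_eq_integral_abs_deriv_smul measurableSet_Ioi
    hderiv hinj (fun t => x / (t ^ (1/α) + x))
  rw [himg] at key
  have key2 : ∫ s in Set.Ioi (0:ℝ), |x ^ α * (α * s ^ (α - 1))| • (x / ((f s) ^ (1/α) + x))
      = ∫ s in Set.Ioi (0:ℝ), (x ^ α * α) * (s ^ (α - 1) / (1 + s)) := by
    apply setIntegral_congr_fun measurableSet_Ioi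
    intro s hs
    rw [Set.mem_Ioi] at hs
    have hfs : (f s) ^ (1/α) = x * s := by
      simp only [hf]
      rw [← Real.mul_rpow (le_of_lt hx) (le_of_lt hs),
        ← Real.rpow_mul (by positivity), mul_one_div_cancel (ne_of_gt hα0), Real.rpow_one]
    have hsα : (0:ℝ) < s ^ (α - 1) := Real.rpow_pos_of_pos hs _
    simp only [smul_eq_mul, hfs]
    rw [abs_of_pos (by positivity)]
    have : x / (x * s + x) = 1 / (1 + s) := by
      rw [show x * s + x = x * (1 + s) by ring]
      rw [div_mul_eq_div_div_swap]
      field_simp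
    rw [this]
    field_simp
  rw [key, key2, MeasureTheory.integral_const_mul, hJ]
  have hsin : Real.sin (α * π) ≠ 0 := by
    apply ne_of_gt
    apply Real.sin_pos_of_pos_of_lt_pi (by positivity)
    nlinarith [Real.pi_pos]
  rw [mul_comm π α] at hJ ⊢
  rw [mul_comm α π]
  have hsin2 : Real.sin (π * α) ≠ 0 := by rw [mul_comm]; exact hsin
  have hπ : π ≠ 0 := ne_of_gt Real.pi_pos
  have hα : α ≠ 0 := ne_of_gt hα0
  field_simp
end

section
/- Let p be a polynomial of degree n with sup_{|z|≤1} |p(z)| ≤ M. Then sup_{|z|≤1} |p'(z)| ≤ n·M. -/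
open Polynomial Finset

private lemma re_div_pos {z r : ℂ} (hz : ‖z‖ = 1) (hr : ‖r‖ < 1) : 0 < (z / (z - r)).re := by
  have hw : z - r ≠ 0 := by
    intro h
    rw [sub_eq_zero] at h
    rw [← h] at hr; exact absurd hz (ne_of_lt hr)
  have hns : 0 < Complex.normSq (z - r) := Complex.normSq_pos.mpr hw
  have hre : (z / (z - r)).re
      = (z * (starRingEnd ℂ) (z - r)).re / Complex.normSq (z - r) := by
    rw [Complex.div_re, Complex.mul_re]
    simp only [Complex.conj_re, Complex.conj_im]
    ring
  rw [hre]
  apply div_pos _ hns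
  have hexp : z * (starRingEnd ℂ) (z - r) = (Complex.normSq z : ℂ) - z * (starRingEnd ℂ) r := by
    rw [map_sub, mul_sub, Complex.mul_conj]
  have h1 : (z * (starRingEnd ℂ) r).re ≤ ‖z * (starRingEnd ℂ) r‖ := by
    exact Complex.re_le_norm _
  have h2 : ‖z * (starRingEnd ℂ) r‖ = ‖r‖ := by
    rw [norm_mul, hz, one_mul]; exact norm_star r
  have h3 : Complex.normSq z = 1 := by
    rw [Complex.normSq_eq_norm_sq, hz, one_pow]
  rw [hexp, h3]
  simp only [Complex.sub_re, Complex.ofReal_one, Complex.one_re]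
  rw [h2] at h1
  linarith

private lemma msum_pos {ι : Type*} {s : Multiset ι} (hs : s ≠ 0) {g : ι → ℝ}
    (h : ∀ x ∈ s, 0 < g x) : 0 < (s.map g).sum := by
  induction s using Multiset.induction_on with
  | empty => exact absurd rfl hs
  | cons a t ih =>
    rcases eq_or_ne t 0 with rfl | ht
    · simpa using h a (by simp)
    · have := ih ht (fun x hx => h x (Multiset.mem_cons_of_mem hx))
      simp only [Multiset.map_cons, Multiset.sum_cons]
      have ha := h a (Multiset.mem_cons_self a t)
      linarith

private lemma maxmod {f : ℂ → ℂ} (hf : Differentiable ℂ f) {M : ℝ}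
    (h : ∀ w : ℂ, ‖w‖ = 1 → ‖f w‖ ≤ M) : ∀ w : ℂ, ‖w‖ ≤ 1 → ‖f w‖ ≤ M := by
  intro w hw
  have hb : Bornology.IsBounded (Metric.ball (0:ℂ) 1) := Metric.isBounded_ball
  refine Complex.norm_le_of_forall_mem_frontier_norm_le hb hf.diffContOnCl ?_ ?_
  · intro z hz
    rw [frontier_ball (0:ℂ) one_ne_zero, mem_sphere_zero_iff_norm] at hz
    exact h z hz
  · rw [closure_ball (0:ℂ) one_ne_zero, mem_closedBall_zero_iff]
    exact hw
private lemma deriv_ne_zero {f : Polynomial ℂ} (hf0 : f ≠ 0) (hn : 1 ≤ f.natDegree)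
    (hroots : ∀ r ∈ f.roots, ‖r‖ < 1) {z : ℂ} (hz : ‖z‖ = 1) :
    (derivative f).eval z ≠ 0 := by
  classical
  have hsplit : Splits f := IsAlgClosed.splits f
  set S := f.roots with hSdef
  have hcard : Multiset.card S = f.natDegree := splits_iff_card_roots.mp hsplit
  have hS0 : S ≠ 0 := by
    intro h
    rw [h] at hcard; simp at hcard; omega
  have hfac : f = C f.leadingCoeff * (S.map fun a => X - C a).prod :=
    hsplit.eq_prod_roots
  have hlc : f.leadingCoeff ≠ 0 := leadingCoeff_ne_zero.mpr hf0
  have hzr : ∀ r ∈ S, z - r ≠ 0 := by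
    intro r hr h
    rw [sub_eq_zero] at h
    have := hroots r hr
    rw [← h] at this; exact absurd hz (ne_of_lt this)
  set Pz : ℂ := (S.map fun r => z - r).prod with hPzdef
  have hPzne : Pz ≠ 0 := by
    rw [hPzdef]
    refine Multiset.prod_ne_zero ?_
    intro h
    rcases Multiset.mem_map.mp h with ⟨r, hr, hr0⟩
    exact hzr r hr hr0
  have hevalprod : eval z ((S.map fun a => X - C a).prod) = Pz := by
    have h := (evalRingHom z).map_multiset_prod (S.map fun a => X - C a)
    rw [Multiset.map_map] at h
    simpa [Function.comp] using h
  have hfz : f.eval z = f.leadingCoeff * Pz := by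
    conv_lhs => rw [hfac]
    rw [eval_mul, eval_C, hevalprod]
  have hderiv : derivative ((S.map fun a => X - C a).prod)
      = (S.map fun i => ((S.erase i).map fun a => X - C a).prod).sum := by
    rw [derivative_prod]
    congr 1
    refine Multiset.map_congr rfl fun r hr => ?_
    simp
  have hevalterm : ∀ r : ℂ, eval z (((S.erase r).map fun a => X - C a).prod)
      = ((S.erase r).map fun a => z - a).prod := by
    intro r
    have h := (evalRingHom z).map_multiset_prod ((S.erase r).map fun a => X - C a)
    rw [Multiset.map_map] at h
    simpa [Function.comp] using h
  have hdeval : (derivative f).eval z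
      = f.leadingCoeff * (S.map fun i => ((S.erase i).map fun a => z - a).prod).sum := by
    conv_lhs => rw [hfac]
    rw [derivative_mul, derivative_C, zero_mul, zero_add, eval_mul, eval_C, hderiv]
    congr 1
    have h := map_multiset_sum (evalRingHom z).toAddMonoidHom
      (S.map fun i => ((S.erase i).map fun a => X - C a).prod)
    rw [Multiset.map_map] at h
    rw [show (eval z (S.map fun i => ((S.erase i).map fun a => X - C a).prod).sum)
        = (evalRingHom z).toAddMonoidHom (S.map fun i => ((S.erase i).map fun a => X - C a).prod).sum from rfl, h]
    refine congrArg Multiset.sum (Multiset.map_congr rfl fun r hr => ?_)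
    simpa [Function.comp] using hevalterm r
  have hkey : ∀ r ∈ S, z * ((S.erase r).map fun a => z - a).prod = Pz * (z / (z - r)) := by
    intro r hr
    have hP : Pz = (z - r) * ((S.erase r).map fun a => z - a).prod := by
      rw [hPzdef]
      conv_lhs => rw [← Multiset.cons_erase hr]
      rw [Multiset.map_cons, Multiset.prod_cons]
    have h2 : (z - r) * (z / (z - r)) = z := by
      rw [mul_comm, div_mul_cancel₀ _ (hzr r hr)]
    rw [hP]
    calc z * ((S.erase r).map fun a => z - a).prod
        = ((z - r) * (z / (z - r))) * ((S.erase r).map fun a => z - a).prod := by rw [h2]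
      _ = (z - r) * ((S.erase r).map fun a => z - a).prod * (z / (z - r)) := by ring
  set T : ℂ := (S.map fun r => z / (z - r)).sum with hTdef
  have hTre : 0 < T.re := by
    have h : T.re = (S.map fun r => (z / (z - r)).re).sum := by
      have h := map_multiset_sum Complex.reAddGroupHom (S.map fun r => z / (z - r))
      rw [Multiset.map_map] at h
      simpa [Function.comp] using h
    rw [h]
    exact msum_pos hS0 fun r hr => re_div_pos hz (hroots r hr)
  have hTne : T ≠ 0 := fun h => by rw [h] at hTre; simp at hTre
  have hmain : z * (derivative f).eval z = f.eval z * T := by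
    rw [hdeval, hfz, hTdef]
    rw [mul_left_comm, ← Multiset.sum_map_mul_left]
    rw [Multiset.map_congr rfl hkey, Multiset.sum_map_mul_left]
    ring
  intro h
  rw [h, mul_zero] at hmain
  exact (mul_ne_zero (by rw [hfz]; exact mul_ne_zero hlc hPzne) hTne) hmain.symm

private noncomputable def revp (p : Polynomial ℂ) (n : ℕ) : Polynomial ℂ :=
  ∑ k ∈ range (n+1), C (p.coeff (n-k)) * X^k

private lemma revp_eval (p : Polynomial ℂ) (n : ℕ) (hdeg : p.natDegree ≤ n)
    {w : ℂ} (hw : w ≠ 0) : (revp p n).eval w = w^n * p.eval w⁻¹ := by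
  have h1 : p.eval w⁻¹ = ∑ j ∈ range (n+1), p.coeff j * (w⁻¹)^j :=
    eval_eq_sum_range' (lt_of_le_of_lt hdeg (lt_add_one n)) _
  have h2 : (revp p n).eval w = ∑ k ∈ range (n+1), p.coeff (n-k) * w^k := by
    simp [revp, eval_finset_sum]
  rw [h1, h2, Finset.mul_sum]
  have := Finset.sum_range_reflect (fun j => p.coeff j * w^(n-j)) (n+1)
  simp only [Nat.add_sub_cancel] at this
  rw [show (∑ k ∈ range (n+1), p.coeff (n-k) * w^k)
      = ∑ k ∈ range (n+1), p.coeff (n-k) * w^(n-(n-k)) from ?_, this]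
  · refine Finset.sum_congr rfl fun j hj => ?_
    have hjn : j ≤ n := Nat.lt_succ_iff.mp (Finset.mem_range.mp hj)
    rw [pow_sub₀ w hw hjn, inv_pow]
    ring
  · refine Finset.sum_congr rfl fun k hk => ?_
    have hkn : k ≤ n := Nat.lt_succ_iff.mp (Finset.mem_range.mp hk)
    rw [Nat.sub_sub_self hkn]
private lemma revp_bound (p : Polynomial ℂ) (n : ℕ) (M : ℝ) (hdeg : p.natDegree ≤ n)
    (hbound : ∀ z : ℂ, ‖z‖ ≤ 1 → ‖p.eval z‖ ≤ M) :
    ∀ w : ℂ, ‖w‖ ≤ 1 → ‖(revp p n).eval w‖ ≤ M := by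
  apply maxmod ((revp p n).differentiable)
  intro w hw
  have hw0 : w ≠ 0 := by intro h; rw [h] at hw; simp at hw
  rw [revp_eval p n hdeg hw0, norm_mul, norm_pow, hw, one_pow, one_mul]
  exact hbound _ (by rw [norm_inv, hw]; norm_num)

private lemma growth_bound (p : Polynomial ℂ) (n : ℕ) (M : ℝ) (hdeg : p.natDegree ≤ n)
    (hbound : ∀ z : ℂ, ‖z‖ ≤ 1 → ‖p.eval z‖ ≤ M) :
    ∀ z : ℂ, 1 ≤ ‖z‖ → ‖p.eval z‖ ≤ M * ‖z‖^n := by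
  intro z hz
  have hz0 : z ≠ 0 := by intro h; rw [h, norm_zero] at hz; linarith
  have hinv : ‖z⁻¹‖ ≤ 1 := by
    rw [norm_inv]
    exact inv_le_one_of_one_le₀ hz
  have h := revp_bound p n M hdeg hbound z⁻¹ hinv
  rw [revp_eval p n hdeg (inv_ne_zero hz0), inv_inv] at h
  have hnorm : ‖(z⁻¹)^n * p.eval z‖ = ‖z‖⁻¹^n * ‖p.eval z‖ := by
    rw [norm_mul, norm_pow, norm_inv]
  rw [hnorm] at h
  have hzpow : (0:ℝ) < ‖z‖^n := pow_pos (lt_of_lt_of_le one_pos hz) n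
  rw [inv_pow] at h
  calc ‖p.eval z‖ = (‖z‖^n)⁻¹ * ‖p.eval z‖ * ‖z‖^n := by
        rw [mul_comm (‖z‖^n)⁻¹, mul_assoc, inv_mul_cancel₀ (ne_of_gt hzpow), mul_one]
    _ ≤ M * ‖z‖^n := by
        apply mul_le_mul_of_nonneg_right h (le_of_lt hzpow)

private lemma coeff_bound (p : Polynomial ℂ) (n : ℕ) (M : ℝ) (hdeg : p.natDegree ≤ n)
    (hbound : ∀ z : ℂ, ‖z‖ ≤ 1 → ‖p.eval z‖ ≤ M) : ‖p.coeff n‖ ≤ M := by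
  have h := revp_bound p n M hdeg hbound 0 (by simp)
  have he : (revp p n).eval 0 = p.coeff n := by
    rw [revp, eval_finset_sum]
    rw [Finset.sum_eq_single 0]
    · simp
    · intro b _ hb0; simp [zero_pow hb0]
    · intro h; exact absurd (Finset.mem_range.mpr (Nat.succ_pos n)) h
  rwa [he] at h
/-- Bernstein's inequality: if `p` is a polynomial of degree `n` with
`|p(z)| ≤ M` on the closed unit disk, then `|p'(z)| ≤ nM` there. -/
theorem bernstein_inequality (p : Polynomial ℂ) (n : ℕ) (M : ℝ)
    (hdeg : p.natDegree ≤ n)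
    (hbound : ∀ z : ℂ, ‖z‖ ≤ 1 → ‖p.eval z‖ ≤ M) :
    ∀ z : ℂ, ‖z‖ ≤ 1 → ‖(Polynomial.derivative p).eval z‖ ≤ n * M := by
  have hM0 : 0 ≤ M := le_trans (norm_nonneg _) (hbound 0 (by simp))
  rcases eq_or_lt_of_le hM0 with hM | hM
  · -- M = 0 : then p vanishes on the disk, hence p = 0
    have hp : p = 0 := by
      apply eq_zero_of_infinite_isRoot
      have him : ((fun x : ℝ => (x : ℂ)) '' Set.Ioo 0 1).Infinite := by
        apply Set.Infinite.image
        · intro a _ b _ h; exact Complex.ofReal_injective h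
        · exact Set.Ioo_infinite (by norm_num)
      refine him.mono ?_
      rintro _ ⟨x, hx, rfl⟩
      have hx1 : ‖(x:ℂ)‖ ≤ 1 := by
        rw [Complex.norm_real, Real.norm_of_nonneg (le_of_lt hx.1)]
        exact le_of_lt hx.2
      have h := hbound _ hx1
      rw [← hM] at h
      have : ‖p.eval (x:ℂ)‖ = 0 := le_antisymm h (norm_nonneg _)
      simpa [Polynomial.IsRoot] using norm_eq_zero.mp this
    intro z _
    rw [hp]
    simp [← hM]
  · rcases Nat.eq_zero_or_pos n with hn | hn
    · subst hn
      have h0 : p.natDegree = 0 := Nat.le_zero.mp hdeg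
      have := Polynomial.eq_C_of_natDegree_eq_zero h0
      intro z _
      rw [this]
      simp
    · apply maxmod ((derivative p).differentiable)
      intro z hz
      by_contra hgt
      push_neg at hgt
      set d := (derivative p).eval z with hd
      have hz0 : z ≠ 0 := by intro h; rw [h, norm_zero] at hz; norm_num at hz
      have hzp : ‖z^(n-1)‖ = 1 := by rw [norm_pow, hz, one_pow]
      have hnM : (0:ℝ) < n * M := mul_pos (by exact_mod_cast hn) hM
      set lam : ℂ := d / ((n:ℂ) * (M:ℂ) * z^(n-1)) with hlam
      have hMne : (M:ℂ) ≠ 0 := Complex.ofReal_ne_zero.mpr (ne_of_gt hM)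
      have hnne : (n:ℂ) ≠ 0 := Nat.cast_ne_zero.mpr (by omega)
      have hzpow : z^(n-1) ≠ 0 := pow_ne_zero _ hz0
      have hden : ((n:ℂ) * (M:ℂ) * z^(n-1)) ≠ 0 := mul_ne_zero (mul_ne_zero hnne hMne) hzpow
      have hdennorm : ‖(n:ℂ) * (M:ℂ) * z^(n-1)‖ = n * M := by
        rw [norm_mul, norm_mul, hzp, mul_one, Complex.norm_natCast, Complex.norm_real,
          Real.norm_of_nonneg hM0]
      have hlam1 : 1 < ‖lam‖ := by
        rw [hlam, norm_div, hdennorm, lt_div_iff₀ hnM, one_mul]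
        exact hgt
      set f : Polynomial ℂ := C ((M:ℂ) * lam) * X^n - p with hf
      have hc := coeff_bound p n M hdeg hbound
      have hgrow := growth_bound p n M hdeg hbound
      have hMlam : M < ‖(M:ℂ) * lam‖ := by
        rw [norm_mul, Complex.norm_real, Real.norm_of_nonneg hM0]
        nlinarith
      have hfcoeff : f.coeff n = (M:ℂ) * lam - p.coeff n := by
        rw [hf, coeff_sub, coeff_C_mul, coeff_X_pow]
        simp
      have hfcn : f.coeff n ≠ 0 := by
        rw [hfcoeff]
        intro h
        rw [sub_eq_zero] at h
        rw [h] at hMlam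
        linarith
      have hf0 : f ≠ 0 := fun h => hfcn (by rw [h]; simp)
      have hfd_le : f.natDegree ≤ n := by
        refine le_trans (natDegree_sub_le _ _) (max_le ?_ hdeg)
        exact le_trans (natDegree_C_mul_le _ _) (le_of_eq (natDegree_X_pow n))
      have hfd : f.natDegree = n := le_antisymm hfd_le (le_natDegree_of_ne_zero hfcn)
      have hroots : ∀ r ∈ f.roots, ‖r‖ < 1 := by
        intro r hr
        by_contra hge
        push_neg at hge
        have hre : f.eval r = 0 := (mem_roots'.mp hr).2
        have heq : (M:ℂ) * lam * r^n = p.eval r := by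
          rw [hf] at hre
          simp only [eval_sub, eval_mul, eval_C, eval_pow, eval_X] at hre
          exact sub_eq_zero.mp hre
        have h1 : M * ‖lam‖ * ‖r‖^n ≤ M * ‖r‖^n := by
          have hnn : ‖(M:ℂ) * lam * r^n‖ = M * ‖lam‖ * ‖r‖^n := by
            rw [norm_mul, norm_mul, norm_pow, Complex.norm_real, Real.norm_of_nonneg hM0]
          rw [← hnn, heq]
          exact hgrow r hge
        have hrp : (1:ℝ) ≤ ‖r‖^n := one_le_pow₀ hge
        nlinarith [mul_pos (mul_pos hM (lt_of_lt_of_le zero_lt_one hrp)) (sub_pos.mpr hlam1)]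
      have hder := deriv_ne_zero hf0 (by rw [hfd]; exact hn) hroots hz
      apply hder
      have hcomp : derivative f = C ((M:ℂ)*lam) * (C (n:ℂ) * X^(n-1)) - derivative p := by
        rw [hf, derivative_sub, derivative_C_mul, derivative_X_pow]
      rw [hcomp]
      simp only [eval_sub, eval_mul, eval_C, eval_pow, eval_X, ← hd]
      have hfin : (M:ℂ) * lam * ((n:ℂ) * z^(n-1)) = d := by
        rw [hlam]
        field_simp
      rw [hfin, sub_self]
end

section
/- Let f be continuous on the closed unit disk, let p be a polynomial of degree n with sup_{|z|≤1} |f(z) − p(z)| ≤ d/3 for some d > 0, and suppose there exist points z₁, z₂ on the unit circle with |f(z₂) − f(z₁)| ≥ d and |arg(z₂) − arg(z₁)| ≤ δ (measuring the shorter arc). If also sup_{|z|≤1} |f(z)| ≤ R, then n ≥ (d/3) / (δ·(R + d/3)). -/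
open Polynomial Metric

lemma reflect_eval_aux (p : Polynomial ℂ) (n : ℕ) (hdeg : p.natDegree ≤ n)
    {z : ℂ} (hz : z ≠ 0) : (p.reflect n).eval z = p.eval z⁻¹ * z ^ n := by
  letI : Invertible (z⁻¹) := invertibleOfNonzero (inv_ne_zero hz)
  have h := Polynomial.eval₂_reflect_mul_pow (RingHom.id ℂ) z⁻¹ n p hdeg
  rw [invOf_eq_inv, inv_inv] at h
  have h' : (p.reflect n).eval z * (z⁻¹) ^ n = p.eval z⁻¹ := h
  field_simp at h'
  rw [one_div] at h'
  rw [← h', inv_pow, mul_assoc, inv_mul_cancel₀ (pow_ne_zero n hz), mul_one]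

/-- Growth estimate outside the unit disk + Cauchy-type coefficient bound. -/
lemma poly_growth (p : Polynomial ℂ) (n : ℕ) (hdeg : p.natDegree ≤ n) (M : ℝ)
    (hp : ∀ z : ℂ, ‖z‖ ≤ 1 → ‖p.eval z‖ ≤ M) :
    (∀ w : ℂ, 1 ≤ ‖w‖ → ‖p.eval w‖ ≤ M * ‖w‖ ^ n) ∧ ‖p.coeff n‖ ≤ M := by
  set q := p.reflect n with hq
  -- ‖q‖ ≤ M on the closed unit ball, by maximum modulus
  have hqball : ∀ z : ℂ, ‖z‖ ≤ 1 → ‖q.eval z‖ ≤ M := by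
    intro z hz
    have hcl : z ∈ closure (Metric.ball (0 : ℂ) 1) := by
      rw [closure_ball (0 : ℂ) one_ne_zero]
      simpa [Metric.mem_closedBall, dist_eq_norm] using hz
    refine Complex.norm_le_of_forall_mem_frontier_norm_le Metric.isBounded_ball
      (q.differentiable.diffContOnCl) ?_ hcl
    intro w hw
    rw [frontier_ball (0 : ℂ) one_ne_zero, mem_sphere_iff_norm, sub_zero] at hw
    have hw0 : w ≠ 0 := by intro h; rw [h] at hw; simp at hw
    rw [reflect_eval_aux p n hdeg hw0]
    have h1 : ‖w⁻¹‖ ≤ 1 := by rw [norm_inv, hw]; norm_num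
    calc ‖p.eval w⁻¹ * w ^ n‖ = ‖p.eval w⁻¹‖ * ‖w‖ ^ n := by
          rw [norm_mul, norm_pow]
      _ ≤ M := by rw [hw, one_pow, mul_one]; exact hp _ h1
  constructor
  · intro w hw
    have hw0 : w ≠ 0 := by intro h; rw [h] at hw; simp at hw; linarith
    have hinv0 : w⁻¹ ≠ 0 := inv_ne_zero hw0
    have := reflect_eval_aux p n hdeg hinv0
    rw [inv_inv] at this
    have hpw : p.eval w = q.eval w⁻¹ * w ^ n := by
      have h2 : q.eval w⁻¹ = p.eval w * (w⁻¹) ^ n := this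
      rw [h2, mul_assoc, ← mul_pow, inv_mul_cancel₀ hw0, one_pow, mul_one]
    rw [hpw, norm_mul, norm_pow]
    have : ‖q.eval w⁻¹‖ ≤ M := hqball _ (by rw [norm_inv]; exact inv_le_one_of_one_le₀ hw)
    exact mul_le_mul_of_nonneg_right this (by positivity)
  · have h0 : q.coeff 0 = p.coeff n := by
      rw [hq, Polynomial.coeff_reflect, Polynomial.revAt_le (Nat.zero_le n), Nat.sub_zero]
    have := hqball 0 (by simp)
    rwa [← Polynomial.coeff_zero_eq_eval_zero, h0] at this

lemma multiset_sum_pos (s : Multiset ℝ) (hs : s ≠ 0) (h : ∀ x ∈ s, 0 < x) : 0 < s.sum := by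
  induction s using Multiset.induction_on with
  | empty => exact absurd rfl hs
  | cons a t ih =>
    rw [Multiset.sum_cons]
    rcases eq_or_ne t 0 with rfl | ht
    · simpa using h a (by simp)
    · have := ih ht (fun x hx => h x (Multiset.mem_cons_of_mem hx))
      have ha := h a (Multiset.mem_cons_self a t)
      linarith

/-- Logarithmic derivative formula at a non-root. -/
lemma eval_derivative_eq_sum (g : Polynomial ℂ) {w : ℂ} (hw : g.eval w ≠ 0) :
    g.derivative.eval w = g.eval w * ((g.roots.map (fun r => (w - r)⁻¹)).sum) := by
  classical
  have hg0 : g ≠ 0 := by rintro rfl; simp at hw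
  have hfac := Polynomial.Splits.eq_prod_roots (IsAlgClosed.splits g)
  set l := g.leadingCoeff with hl
  set s := g.roots with hs
  -- each w - r is nonzero
  have hnz : ∀ r ∈ s, w - r ≠ 0 := by
    intro r hr h0
    apply hw
    rw [hfac]
    rw [Polynomial.eval_mul, Polynomial.eval_multiset_prod]
    have : (0 : ℂ) ∈ (s.map fun a => X - C a).map (Polynomial.eval w) := by
      rw [Multiset.map_map]
      refine Multiset.mem_map.mpr ⟨r, hr, ?_⟩
      simp [h0]
    rw [Multiset.prod_eq_zero this, mul_zero]
  have hder : g.derivative = C l * (Polynomial.derivative ((s.map fun a => X - C a).prod)) := by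
    conv_lhs => rw [hfac]
    rw [Polynomial.derivative_mul, Polynomial.derivative_C, zero_mul, zero_add]
  rw [hder, Polynomial.eval_mul, Polynomial.eval_C, Polynomial.derivative_prod]
  have heval : ∀ r ∈ s, Polynomial.eval w
      (((s.erase r).map fun a => X - C a).prod * Polynomial.derivative (X - C r))
      = ((s.erase r).map fun a => w - a).prod := by
    intro r hr
    rw [Polynomial.eval_mul]
    have : Polynomial.derivative (X - C r) = 1 := by
      rw [Polynomial.derivative_sub, Polynomial.derivative_X, Polynomial.derivative_C, sub_zero]
    rw [this, Polynomial.eval_one, mul_one, Polynomial.eval_multiset_prod, Multiset.map_map]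
    congr 1
    exact Multiset.map_congr rfl (fun a _ => by simp)
  -- rewrite the sum of evals
  have hsum : Polynomial.eval w ((s.map fun r =>
      ((s.erase r).map fun a => X - C a).prod * Polynomial.derivative (X - C r)).sum)
      = (s.map fun r => ((s.erase r).map fun a => w - a).prod).sum := by
    have hh := map_multiset_sum (Polynomial.evalRingHom w)
        ((s.map fun r => ((s.erase r).map fun a => X - C a).prod * Polynomial.derivative (X - C r)))
    simp only [Polynomial.coe_evalRingHom] at hh
    rw [hh, Multiset.map_map]
    congr 1
    exact Multiset.map_congr rfl (fun r hr => heval r hr)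
  rw [hsum]
  -- now the right-hand side
  have hgw : g.eval w = l * (s.map fun a => w - a).prod := by
    conv_lhs => rw [hfac]
    rw [Polynomial.eval_mul, Polynomial.eval_C, Polynomial.eval_multiset_prod, Multiset.map_map]
    congr 2
    exact Multiset.map_congr rfl (fun a _ => by simp)
  rw [hgw, mul_assoc]
  congr 1
  rw [← Multiset.sum_map_mul_left]
  congr 1
  refine Multiset.map_congr rfl (fun r hr => ?_)
  have hprod : (s.map fun a => w - a).prod
      = (w - r) * ((s.erase r).map fun a => w - a).prod := by
    rw [← Multiset.prod_map_erase (f := fun a => w - a) hr]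
  rw [hprod, mul_comm (w - r), mul_assoc, mul_inv_cancel₀ (hnz r hr), mul_one]

/-- Bernstein-type bound outside the unit disk. -/
lemma deriv_bound_outside (p : Polynomial ℂ) (n : ℕ) (hn : 1 ≤ n) (hdeg : p.natDegree ≤ n)
    (M : ℝ) (hM : 0 < M) (hp : ∀ z : ℂ, ‖z‖ ≤ 1 → ‖p.eval z‖ ≤ M)
    {w : ℂ} (hw : 1 < ‖w‖) : ‖p.derivative.eval w‖ ≤ n * M * ‖w‖ ^ (n - 1) := by
  classical
  obtain ⟨hgrow, hcoeff⟩ := poly_growth p n hdeg M hp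
  have hw0 : w ≠ 0 := by intro h; rw [h] at hw; simp at hw; linarith
  set D : ℂ := (n : ℂ) * (M : ℂ) * w ^ (n - 1) with hD
  have hD0 : D ≠ 0 := by
    apply mul_ne_zero (mul_ne_zero ?_ ?_) (pow_ne_zero _ hw0)
    · exact_mod_cast (Nat.pos_of_ne_zero (by omega)).ne'
    · exact_mod_cast hM.ne'
  set lam : ℂ := p.derivative.eval w / D with hlam
  have hDnorm : ‖D‖ = n * M * ‖w‖ ^ (n - 1) := by
    simp [hD, abs_of_pos hM]
  suffices h : ‖lam‖ ≤ 1 by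
    have : p.derivative.eval w = lam * D := by rw [hlam, div_mul_cancel₀ _ hD0]
    rw [this, norm_mul, hDnorm]
    calc ‖lam‖ * (n * M * ‖w‖ ^ (n - 1)) ≤ 1 * (n * M * ‖w‖ ^ (n - 1)) :=
          mul_le_mul_of_nonneg_right h (by positivity)
      _ = n * M * ‖w‖ ^ (n - 1) := one_mul _
  by_contra hcon
  push_neg at hcon
  set g : Polynomial ℂ := C (lam * M) * X ^ n - p with hg
  have hcoeffn : g.coeff n = lam * M - p.coeff n := by
    simp [hg, Polynomial.coeff_C_mul, Polynomial.coeff_X_pow, mul_assoc]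
  have hcn0 : g.coeff n ≠ 0 := by
    rw [hcoeffn, sub_ne_zero]
    intro h
    have : ‖lam * (M : ℂ)‖ ≤ M := h ▸ hcoeff
    rw [norm_mul, Complex.norm_real, Real.norm_eq_abs, abs_of_pos hM] at this
    nlinarith
  have hg0 : g ≠ 0 := fun h => hcn0 (by rw [h]; simp)
  have hdegg : g.natDegree = n := by
    have h1 : g.natDegree ≤ n := by
      apply le_trans (Polynomial.natDegree_sub_le _ _)
      simp only [max_le_iff]
      exact ⟨le_trans (Polynomial.natDegree_C_mul_le _ _) (by simp), hdeg⟩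
    exact le_antisymm h1 (Polynomial.le_natDegree_of_ne_zero hcn0)
  -- all roots in closed unit disk
  have hroots : ∀ r ∈ g.roots, ‖r‖ ≤ 1 := by
    intro r hr
    by_contra hr1
    push_neg at hr1
    have heval : g.eval r = 0 := (Polynomial.mem_roots hg0).mp hr
    have : lam * M * r ^ n = p.eval r := by
      have := heval
      simp only [hg, Polynomial.eval_sub, Polynomial.eval_mul, Polynomial.eval_C,
        Polynomial.eval_pow, Polynomial.eval_X] at this
      exact sub_eq_zero.mp this
    have h1 : ‖lam‖ * M * ‖r‖ ^ n ≤ M * ‖r‖ ^ n := by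
      calc ‖lam‖ * M * ‖r‖ ^ n = ‖lam * (M : ℂ) * r ^ n‖ := by
            rw [norm_mul, norm_mul, norm_pow, Complex.norm_real, Real.norm_eq_abs,
              abs_of_pos hM]
        _ = ‖p.eval r‖ := by rw [this]
        _ ≤ M * ‖r‖ ^ n := hgrow r hr1.le
    have h2 : (0:ℝ) < ‖r‖ ^ n := by positivity
    have h3 : M * ‖r‖ ^ n < ‖lam‖ * M * ‖r‖ ^ n := by nlinarith [mul_pos hM h2]
    linarith
  -- w is not a root
  have hevalw : g.eval w ≠ 0 := by
    intro h
    have : w ∈ g.roots := (Polynomial.mem_roots hg0).mpr h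
    linarith [hroots w this]
  have hcard : g.roots.card = n := by
    rw [← hdegg]
    exact Polynomial.splits_iff_card_roots.mp (IsAlgClosed.splits g)
  have hne : g.roots ≠ 0 := by
    intro h
    rw [h, Multiset.card_zero] at hcard
    omega
  -- derivative of g vanishes at w
  have hder0 : g.derivative.eval w = 0 := by
    have hd : g.derivative = C (lam * M) * (C (n : ℂ) * X ^ (n - 1)) - p.derivative := by
      rw [hg, Polynomial.derivative_sub, Polynomial.derivative_mul, Polynomial.derivative_C,
        zero_mul, zero_add, Polynomial.derivative_X_pow]
    rw [hd]
    simp only [Polynomial.eval_sub, Polynomial.eval_mul, Polynomial.eval_C,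
      Polynomial.eval_pow, Polynomial.eval_X]
    have : lam * (M : ℂ) * ((n : ℂ) * w ^ (n - 1)) = lam * D := by rw [hD]; ring
    rw [this, hlam, div_mul_cancel₀ _ hD0, sub_self]
  -- logarithmic derivative sum is zero
  have hS := eval_derivative_eq_sum g hevalw
  rw [hder0] at hS
  have hS0 : ((g.roots.map fun r => (w - r)⁻¹).sum) = 0 := by
    rcases mul_eq_zero.mp hS.symm with h | h
    · exact absurd h hevalw
    · exact h
  -- but each term of `w * S` has positive real part
  have hwnormsq : 1 < Complex.normSq w := by
    have : ‖w‖ ^ 2 = Complex.normSq w := by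
      rw [Complex.sq_norm]
    nlinarith [this]
  have hterm : ∀ r ∈ g.roots, 0 < (w * (w - r)⁻¹).re := by
    intro r hr
    have hr1 : ‖r‖ ≤ 1 := hroots r hr
    have hu : w - r ≠ 0 := by
      rw [sub_ne_zero]
      intro h
      rw [← h] at hr1
      linarith
    have hdd : w * (w - r)⁻¹ = w / (w - r) := by rw [div_eq_mul_inv]
    rw [hdd, Complex.div_re]
    have hnsq : 0 < Complex.normSq (w - r) := Complex.normSq_pos.mpr hu
    rw [← add_div]
    apply div_pos _ hnsq
    have hrsq : r.re ^ 2 + r.im ^ 2 ≤ 1 := by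
      have h1 : Complex.normSq r ≤ 1 := by
        have : ‖r‖ ^ 2 ≤ 1 := by nlinarith [norm_nonneg r]
        rw [Complex.sq_norm] at this
        exact this
      rw [Complex.normSq_apply] at h1
      nlinarith
    have hwsq : 1 < w.re ^ 2 + w.im ^ 2 := by
      rw [Complex.normSq_apply] at hwnormsq
      nlinarith
    simp only [Complex.sub_re, Complex.sub_im]
    nlinarith [sq_nonneg (w.re * r.im - w.im * r.re), sq_nonneg (w.re * r.re + w.im * r.im)]
  have hmapne : g.roots.map (fun r => (w * (w - r)⁻¹).re) ≠ 0 := by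
    rw [Ne, Multiset.map_eq_zero]
    exact hne
  have hpos : 0 < (g.roots.map (fun r => (w * (w - r)⁻¹).re)).sum := by
    apply multiset_sum_pos _ hmapne
    intro x hx
    obtain ⟨r, hr, rfl⟩ := Multiset.mem_map.mp hx
    exact hterm r hr
  have hzero : (g.roots.map (fun r => (w * (w - r)⁻¹).re)).sum = 0 := by
    have h1 : (g.roots.map (fun r => w * (w - r)⁻¹)).sum = 0 := by
      rw [Multiset.sum_map_mul_left, hS0, mul_zero]
    have h2 := congrArg Complex.re h1
    simp only [Complex.zero_re] at h2
    rw [← h2]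
    have := map_multiset_sum Complex.reAddGroupHom (g.roots.map (fun r => w * (w - r)⁻¹))
    simpa [Multiset.map_map] using this.symm
  linarith

/-- Bernstein's inequality on the unit circle. -/
lemma bernstein_circle (p : Polynomial ℂ) (n : ℕ) (hn : 1 ≤ n) (hdeg : p.natDegree ≤ n)
    (M : ℝ) (hM : 0 < M) (hp : ∀ z : ℂ, ‖z‖ ≤ 1 → ‖p.eval z‖ ≤ M)
    {ζ : ℂ} (hζ : ‖ζ‖ = 1) : ‖p.derivative.eval ζ‖ ≤ n * M := by
  have key : ∀ t : ℝ, 1 < t → ‖p.derivative.eval ((t : ℂ) * ζ)‖ ≤ n * M * t ^ (n - 1) := by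
    intro t ht
    have hnorm : ‖(t : ℂ) * ζ‖ = t := by
      rw [norm_mul, Complex.norm_real, hζ, mul_one, Real.norm_eq_abs, abs_of_pos (by linarith)]
    have := deriv_bound_outside p n hn hdeg M hM hp (w := (t : ℂ) * ζ) (by rw [hnorm]; exact ht)
    rwa [hnorm] at this
  have hF : Filter.Tendsto (fun t : ℝ => ‖p.derivative.eval ((t : ℂ) * ζ)‖)
      (nhdsWithin 1 (Set.Ioi 1)) (nhds ‖p.derivative.eval ζ‖) := by
    have hc : Continuous fun t : ℝ => ‖p.derivative.eval ((t : ℂ) * ζ)‖ :=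
      (p.derivative.continuous.comp (Complex.continuous_ofReal.mul continuous_const)).norm
    have := hc.tendsto 1
    simp only [Complex.ofReal_one, one_mul] at this
    exact this.mono_left nhdsWithin_le_nhds
  have hG : Filter.Tendsto (fun t : ℝ => (n : ℝ) * M * t ^ (n - 1))
      (nhdsWithin 1 (Set.Ioi 1)) (nhds ((n : ℝ) * M)) := by
    have hc : Continuous fun t : ℝ => (n : ℝ) * M * t ^ (n - 1) := by continuity
    have := hc.tendsto 1
    simp only [one_pow, mul_one] at this
    exact this.mono_left nhdsWithin_le_nhds
  refine le_of_tendsto_of_tendsto hF hG ?_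
  filter_upwards [self_mem_nhdsWithin] with t ht
  exact key t ht

/-- Arc-length mean value estimate on the circle. -/
lemma arc_estimate (p : Polynomial ℂ) (B : ℝ) (hB : 0 ≤ B)
    (hbound : ∀ z : ℂ, ‖z‖ = 1 → ‖p.derivative.eval z‖ ≤ B)
    {z₁ : ℂ} (hz₁ : ‖z₁‖ = 1) (θ : ℝ) :
    ‖p.eval (z₁ * Complex.exp (θ * Complex.I)) - p.eval z₁‖ ≤ B * |θ| := by
  set h : ℝ → ℂ := fun t => p.eval (z₁ * Complex.exp ((t : ℂ) * Complex.I)) with hh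
  have hderiv : ∀ t : ℝ, HasDerivAt h
      (p.derivative.eval (z₁ * Complex.exp ((t : ℂ) * Complex.I)) *
        (z₁ * Complex.exp ((t : ℂ) * Complex.I) * Complex.I)) t := by
    intro t
    have h1 : HasDerivAt (fun t : ℝ => (t : ℂ) * Complex.I) Complex.I t := by
      simpa using (Complex.ofRealCLM.hasDerivAt (x := t)).mul_const Complex.I
    have h2 : HasDerivAt (fun t : ℝ => Complex.exp ((t : ℂ) * Complex.I))
        (Complex.exp ((t : ℂ) * Complex.I) * Complex.I) t := by
      have := (Complex.hasDerivAt_exp ((t : ℂ) * Complex.I)).scomp t h1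
      simpa [Function.comp_def, mul_comm] using this
    have h3 : HasDerivAt (fun t : ℝ => z₁ * Complex.exp ((t : ℂ) * Complex.I))
        (z₁ * (Complex.exp ((t : ℂ) * Complex.I) * Complex.I)) t := h2.const_mul z₁
    have h4 := (p.hasDerivAt (z₁ * Complex.exp ((t : ℂ) * Complex.I))).scomp t h3
    exact h4.congr_deriv (by rw [smul_eq_mul]; ring)
  have hbd : ∀ t : ℝ, ‖p.derivative.eval (z₁ * Complex.exp ((t : ℂ) * Complex.I)) *
      (z₁ * Complex.exp ((t : ℂ) * Complex.I) * Complex.I)‖ ≤ B := by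
    intro t
    have hn1 : ‖z₁ * Complex.exp ((t : ℂ) * Complex.I)‖ = 1 := by
      rw [norm_mul, hz₁, one_mul, Complex.norm_exp]
      simp [Complex.mul_re, Complex.I_re, Complex.I_im, Complex.ofReal_re, Complex.ofReal_im]
    rw [norm_mul, norm_mul, hn1, Complex.norm_I, mul_one, mul_one]
    exact hbound _ hn1
  have := Convex.norm_image_sub_le_of_norm_hasDerivWithin_le
    (f := h) (f' := fun t => p.derivative.eval (z₁ * Complex.exp ((t : ℂ) * Complex.I)) *
      (z₁ * Complex.exp ((t : ℂ) * Complex.I) * Complex.I)) (s := Set.univ)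
    (fun x _ => (hderiv x).hasDerivWithinAt) (fun x _ => hbd x) convex_univ
    (Set.mem_univ 0) (Set.mem_univ θ)
  simpa [hh] using this

/-- If a polynomial `p` of degree `n` approximates `f` to within `d/3` on the
closed unit disk, `|f| ≤ R` there, and there are points `z₁, z₂` on the unit
circle with `|f(z₂) − f(z₁)| ≥ d` separated by angle (shorter arc) at most `δ`,
then `n ≥ (d/3)/(δ(R + d/3))`. -/
theorem polynomial_degree_lower_bound (f : ℂ → ℂ) (p : Polynomial ℂ)
    (n : ℕ) (d δ R : ℝ) (hd : 0 < d)
    (hcont : ContinuousOn f (Metric.closedBall (0 : ℂ) 1))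
    (hdeg : p.natDegree ≤ n)
    (happrox : ∀ z : ℂ, ‖z‖ ≤ 1 → ‖f z - p.eval z‖ ≤ d / 3)
    (hfR : ∀ z : ℂ, ‖z‖ ≤ 1 → ‖f z‖ ≤ R)
    (z₁ z₂ : ℂ) (hz₁ : ‖z₁‖ = 1) (hz₂ : ‖z₂‖ = 1)
    (hsep : d ≤ ‖f z₂ - f z₁‖)
    (harg : |Complex.arg (z₂ / z₁)| ≤ δ) :
    (d / 3) / (δ * (R + d / 3)) ≤ (n : ℝ) := by
  have hz₁0 : z₁ ≠ 0 := by intro h; rw [h] at hz₁; simp at hz₁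
  set θ := Complex.arg (z₂ / z₁) with hθ
  have habs : ‖z₂ / z₁‖ = 1 := by
    rw [norm_div, hz₁, hz₂, div_one]
  have hz2eq : z₂ = z₁ * Complex.exp ((θ : ℂ) * Complex.I) := by
    have h := Complex.norm_mul_exp_arg_mul_I (z₂ / z₁)
    rw [habs, Complex.ofReal_one, one_mul, ← hθ] at h
    field_simp at h ⊢
    rw [← h, mul_comm]
  -- d/3 ≤ ‖p z₂ - p z₁‖
  have h₂ := happrox z₂ hz₂.le
  have h₁ := happrox z₁ hz₁.le
  have hkey : d / 3 ≤ ‖p.eval z₂ - p.eval z₁‖ := by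
    have hdecomp : f z₂ - f z₁ =
        (f z₂ - p.eval z₂) + (p.eval z₂ - p.eval z₁) + (p.eval z₁ - f z₁) := by ring
    have hchain : ‖f z₂ - f z₁‖ ≤ d / 3 + ‖p.eval z₂ - p.eval z₁‖ + d / 3 := by
      rw [hdecomp]
      refine le_trans (norm_add₃_le) ?_
      have : ‖p.eval z₁ - f z₁‖ = ‖f z₁ - p.eval z₁‖ := norm_sub_rev _ _
      rw [this]
      gcongr
    linarith
  -- θ ≠ 0, so δ > 0
  have hθ0 : θ ≠ 0 := by
    intro h
    rw [h] at hz2eq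
    simp at hz2eq
    rw [hz2eq] at hkey
    simp at hkey
    linarith
  have hδpos : 0 < δ := lt_of_lt_of_le (abs_pos.mpr hθ0) harg
  have hR0 : 0 ≤ R := le_trans (norm_nonneg _) (hfR z₁ hz₁.le)
  set M : ℝ := R + d / 3 with hM
  have hMpos : 0 < M := by rw [hM]; linarith
  have hpM : ∀ z : ℂ, ‖z‖ ≤ 1 → ‖p.eval z‖ ≤ M := by
    intro z hz
    have : p.eval z = f z - (f z - p.eval z) := by ring
    rw [this]
    refine le_trans (norm_sub_le _ _) ?_
    rw [hM]
    exact add_le_add (hfR z hz) (happrox z hz)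
  -- n ≥ 1
  have hn1 : 1 ≤ n := by
    by_contra h
    push_neg at h
    interval_cases n
    have hp0 : p = Polynomial.C (p.coeff 0) :=
      Polynomial.eq_C_of_natDegree_le_zero hdeg
    rw [hp0] at hkey
    simp at hkey
    linarith
  -- Bernstein + arc estimate
  have hB : ∀ ζ : ℂ, ‖ζ‖ = 1 → ‖p.derivative.eval ζ‖ ≤ n * M := fun ζ hζ =>
    bernstein_circle p n hn1 hdeg M hMpos hpM hζ
  have harc := arc_estimate p (n * M) (by positivity) hB hz₁ θ
  rw [← hz2eq] at harc
  have hfinal : d / 3 ≤ n * M * δ := by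
    calc d / 3 ≤ ‖p.eval z₂ - p.eval z₁‖ := hkey
      _ ≤ n * M * |θ| := harc
      _ ≤ n * M * δ := by
          have : (0:ℝ) ≤ n * M := by positivity
          exact mul_le_mul_of_nonneg_left harg this
  rw [div_le_iff₀ (by positivity : 0 < δ * M)]
  nlinarith
end
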